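/- (Simplicial condition is necessary.) Let W > K ≥ 2 and let θ : Ω → ℝ^K be a measurable, square-integrable random vector with entrywise positive mean a = E[θ] and second-moment matrix R = E[θ θᵀ]. Define the normalized correlation matrix R′ = diag(a)^{−1} R diag(a)^{−1}. If R′ is not simplicial, i.e., some row of R′ lies in the convex hull of the remaining rows of R′, then there exist two W×K column-stochastic separable matrices β₁ and β₂ whose sets of novel words are not identical (in particular, some word is novel for β₁ but not for β₂), such that β₁ θ = β₂ θ almost surely. Consequently, the distribution of any observation generated from document word-distributions β θ is the same under both topic matrices, so no algorithm can consistently identify all novel words of all topics when R′ is not simplicial. -/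

import Mathlib

open MeasureTheory

/-- A real matrix is column-stochastic if its entries are nonnegative and each
column sums to `1`. -/
def Matrix.ColStochastic {m n : ℕ} (B : Matrix (Fin m) (Fin n) ℝ) : Prop :=
  (∀ i j, 0 ≤ B i j) ∧ ∀ j, ∑ i, B i j = 1

/-- Word `i` is a novel word of topic `k` for the topic matrix `β`. -/
def Matrix.NovelWord {W K : ℕ} (β : Matrix (Fin W) (Fin K) ℝ)
    (i : Fin W) (k : Fin K) : Prop :=
  0 < β i k ∧ ∀ l : Fin K, l ≠ k → β i l = 0

/-- A `W × K` matrix `β` is separable if every topic has a novel word. -/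
def Matrix.Separable {W K : ℕ} (β : Matrix (Fin W) (Fin K) ℝ) : Prop :=
  ∀ k : Fin K, ∃ i : Fin W, β.NovelWord i k

/-- **the simplicial condition is necessary.**  Let `W > K ≥ 2`,
let `θ` be a measurable square-integrable random vector in `ℝ^K` with entrywise
positive mean `a` and second-moment matrix `R`, and let
`R' = diag(a)⁻¹ R diag(a)⁻¹`.  If `R'` is not simplicial, i.e. some row of `R'`
lies in the convex hull of the remaining rows, then there exist two
column-stochastic separable `W × K` matrices `β₁, β₂` whose novel-word sets
differ (some word is novel for `β₁` but not for `β₂`) and with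
`β₁ θ = β₂ θ` almost surely — so the observations have the same distribution
under both topic matrices, and no algorithm can consistently identify all
novel words of all topics. -/
lemma aux_mul_int {Ω : Type*} [MeasurableSpace Ω] {μ : Measure Ω} {f g : Ω → ℝ}
    (hf : MemLp f 2 μ) (hg : MemLp g 2 μ) : Integrable (fun ω => f ω * g ω) μ := by
  have h : MemLp (f • g) 1 μ := hg.smul hf (hpqr := ⟨by
    rw [inv_one]; exact ENNReal.inv_two_add_inv_two⟩)
  exact memLp_one_iff_integrable.mp h

lemma aux_sum_two {n : ℕ} {x y : Fin n} (hxy : x ≠ y) (A B : ℝ) :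
    ∑ r : Fin n, (if r = x then A else if r = y then B else 0) = A + B := by
  have h : ∀ r : Fin n, (if r = x then A else if r = y then B else 0)
      = (if r = x then A else 0) + (if r = y then B else 0) := by
    intro r
    by_cases h1 : r = x
    · subst h1; simp [hxy]
    · simp [h1]
  simp_rw [h, Finset.sum_add_distrib]
  simp

theorem simplicial_condition_necessary
    {Ω : Type*} [MeasurableSpace Ω] (μ : Measure Ω) [IsProbabilityMeasure μ]
    (W K : ℕ) (hK : 2 ≤ K) (hWK : K < W)
    (θ : Ω → Fin K → ℝ)
    (hmeas : Measurable θ)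
    (hL2 : ∀ i : Fin K, MemLp (fun ω => θ ω i) 2 μ)
    (a : Fin K → ℝ) (ha_def : ∀ i, a i = ∫ ω, θ ω i ∂μ) (ha_pos : ∀ i, 0 < a i)
    (R R' : Matrix (Fin K) (Fin K) ℝ)
    (hR : ∀ i j, R i j = ∫ ω, θ ω i * θ ω j ∂μ)
    (hR' : ∀ i j, R' i j = R i j / (a i * a j))
    (hnotsimplicial : ∃ i : Fin K,
      (R' i : Fin K → ℝ) ∈ convexHull ℝ ((fun j => (R' j : Fin K → ℝ)) '' {j | j ≠ i})) :
    ∃ β₁ β₂ : Matrix (Fin W) (Fin K) ℝ,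
      β₁.ColStochastic ∧ β₂.ColStochastic ∧
      β₁.Separable ∧ β₂.Separable ∧
      (∃ i : Fin W, (∃ k, β₁.NovelWord i k) ∧ ∀ k, ¬ β₂.NovelWord i k) ∧
      ∀ᵐ ω ∂μ, β₁.mulVec (θ ω) = β₂.mulVec (θ ω) := by
  classical
  obtain ⟨i, hmem⟩ := hnotsimplicial
  -- Step 1: extract convex combination weights c
  rw [convexHull_eq] at hmem
  obtain ⟨ι, tset, w, z, hw0, hw1, hzs, hcm⟩ := hmem
  rw [Finset.centerMass_eq_of_sum_1 _ _ hw1] at hcm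
  set g : ι → Fin K := fun m =>
    if h : z m ∈ (fun j => (R' j : Fin K → ℝ)) '' {j | j ≠ i} then h.choose else i with hg
  have hgspec : ∀ m ∈ tset, g m ≠ i ∧ (R' (g m) : Fin K → ℝ) = z m := by
    intro m hm
    have h := hzs m hm
    simp only [hg, dif_pos h]
    exact ⟨h.choose_spec.1, h.choose_spec.2⟩
  set c : Fin K → ℝ := fun j => ∑ m ∈ tset.filter (fun m => g m = j), w m with hc
  have hc0 : ∀ j, 0 ≤ c j := by
    intro j
    exact Finset.sum_nonneg fun m hm => hw0 m (Finset.mem_filter.mp hm).1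
  have hci : c i = 0 := by
    apply Finset.sum_eq_zero
    intro m hm
    obtain ⟨hm1, hm2⟩ := Finset.mem_filter.mp hm
    exact absurd hm2 (hgspec m hm1).1
  have hcsum : (∑ j, c j) = 1 := by
    rw [hc]
    rw [Finset.sum_fiberwise_of_maps_to (fun m _ => Finset.mem_univ (g m)) w]
    exact hw1
  have hccomb : ∑ j, c j • (R' j : Fin K → ℝ) = R' i := by
    calc ∑ j, c j • (R' j : Fin K → ℝ)
        = ∑ j : Fin K, ∑ m ∈ tset.filter (fun m => g m = j), w m • (R' j : Fin K → ℝ) := by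
          simp [hc, Finset.sum_smul]
      _ = ∑ j : Fin K, ∑ m ∈ tset.filter (fun m => g m = j), w m • z m := by
          refine Finset.sum_congr rfl fun j _ => Finset.sum_congr rfl fun m hm => ?_
          obtain ⟨hm1, hm2⟩ := Finset.mem_filter.mp hm
          rw [← hm2, (hgspec m hm1).2]
      _ = ∑ m ∈ tset, w m • z m :=
          Finset.sum_fiberwise_of_maps_to (fun m _ => Finset.mem_univ (g m)) _
      _ = R' i := hcm
  have hRl : ∀ l, ∑ j, c j * R' j l = R' i l := by
    intro l
    have := congrFun hccomb l
    simpa [Finset.sum_apply] using this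
  -- Step 2: the coefficients e and the key identity for R
  set e : Fin K → ℝ := fun j => c j * (a i / a j) with hedef
  have hane : ∀ j, a j ≠ 0 := fun j => (ha_pos j).ne'
  have hel : ∀ l, R i l = ∑ j, e j * R j l := by
    intro l
    have h := hRl l
    simp only [hR'] at h
    have hai := hane i
    have hal := hane l
    calc R i l = (∑ j, c j * (R j l / (a j * a l))) * (a i * a l) := by
          rw [h]; field_simp
      _ = ∑ j, e j * R j l := by
          rw [Finset.sum_mul]
          refine Finset.sum_congr rfl fun j _ => ?_
          have haj := hane j
          simp only [hedef]
          field_simp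
  have hei : e i = 0 := by simp [hedef, hci]
  have he0 : ∀ j, 0 ≤ e j := fun j =>
    mul_nonneg (hc0 j) (div_nonneg (ha_pos i).le (ha_pos j).le)
  -- Step 3: Y = 0 a.s.
  set Y : Ω → ℝ := fun ω => θ ω i - ∑ j, e j * θ ω j with hYdef
  have hYmem : MemLp Y 2 μ := by
    apply MemLp.sub (hL2 i)
    exact memLp_finset_sum _ (fun j _ => (hL2 j).const_mul (e j))
  have hmul : ∀ p q : Fin K, Integrable (fun ω => θ ω p * θ ω q) μ :=
    fun p q => aux_mul_int (hL2 p) (hL2 q)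
  have key : ∀ f : Ω → ℝ, MemLp f 2 μ →
      ∫ ω, Y ω * f ω ∂μ = (∫ ω, θ ω i * f ω ∂μ) - ∑ j, e j * ∫ ω, θ ω j * f ω ∂μ := by
    intro f hf
    have hintf : ∀ j, Integrable (fun ω => θ ω j * f ω) μ := fun j => aux_mul_int (hL2 j) hf
    have h1 : ∀ ω, Y ω * f ω = θ ω i * f ω - ∑ j, e j * (θ ω j * f ω) := by
      intro ω
      simp only [hYdef, sub_mul, Finset.sum_mul, mul_assoc]
    simp_rw [h1]
    rw [integral_sub (hintf i)
      (integrable_finset_sum _ fun j _ => (hintf j).const_mul (e j)),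
      integral_finset_sum _ fun j _ => (hintf j).const_mul (e j)]
    simp_rw [integral_const_mul]
  have hYθ : ∀ l, ∫ ω, Y ω * θ ω l ∂μ = 0 := by
    intro l
    rw [key _ (hL2 l), ← hR]
    have : ∑ j, e j * ∫ ω, θ ω j * θ ω l ∂μ = ∑ j, e j * R j l := by
      refine Finset.sum_congr rfl fun j _ => ?_
      rw [hR]
    rw [this, hel l, sub_self]
  have hYY : ∫ ω, Y ω * Y ω ∂μ = 0 := by
    rw [key Y hYmem]
    have h1 : ∫ ω, θ ω i * Y ω ∂μ = 0 := by
      rw [← hYθ i]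
      congr 1; funext ω; ring
    have h2 : ∀ j, ∫ ω, θ ω j * Y ω ∂μ = 0 := by
      intro j
      rw [← hYθ j]
      congr 1; funext ω; ring
    simp [h1, h2]
  have hY0 : ∀ᵐ ω ∂μ, Y ω = 0 := by
    have hnn : 0 ≤ᵐ[μ] fun ω => Y ω * Y ω :=
      Filter.Eventually.of_forall fun ω => mul_self_nonneg _
    have := (integral_eq_zero_iff_of_nonneg_ae hnn (aux_mul_int hYmem hYmem)).mp hYY
    filter_upwards [this] with ω h
    exact mul_self_eq_zero.mp h
  -- Step 4: construct the matrices
  set S : ℝ := ∑ j, e j with hSdef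
  have hS0 : 0 ≤ S := Finset.sum_nonneg fun j _ => he0 j
  set t : ℝ := 1 / (2 * (1 + S)) with htdef
  have ht0 : 0 < t := by positivity
  have ht2 : t ≤ 1 / 2 := by
    rw [htdef]
    rw [div_le_div_iff₀ (by positivity) (by norm_num)]
    linarith
  have hte : ∀ j, t * e j ≤ 1 / 2 := by
    intro j
    have hj : e j ≤ 1 + S := by
      have := Finset.single_le_sum (fun j (_ : j ∈ Finset.univ) => he0 j) (Finset.mem_univ j)
      linarith
    have h1 : t * e j ≤ t * (1 + S) := mul_le_mul_of_nonneg_left hj ht0.le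
    have h2 : t * (1 + S) = 1 / 2 := by
      rw [htdef]; field_simp
    linarith
  have hte0 : ∀ j, 0 ≤ t * e j := fun j => mul_nonneg ht0.le (he0 j)
  set emb : Fin K → Fin W := fun k => Fin.castLE hWK.le k with hembdef
  have hembinj : Function.Injective emb := fun x y h => by
    simpa [hembdef, Fin.ext_iff] using h
  set rK : Fin W := ⟨K, hWK⟩ with hrKdef
  have hembne : ∀ k, emb k ≠ rK := by
    intro k h
    have h2 : (k : ℕ) = K := by simpa [hembdef, hrKdef, Fin.ext_iff] using h
    have h3 := k.isLt
    omega
  set β₁ : Matrix (Fin W) (Fin K) ℝ := fun r j =>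
    if r = emb j then 1 - t * e j else if r = rK then t * e j else 0 with hβ₁def
  set β₂ : Matrix (Fin W) (Fin K) ℝ := fun r j =>
    if r = emb j then (if j = i then 1 - t else 1 - t * e j)
    else if r = emb i then t * e j
    else if r = rK then (if j = i then t else 0) else 0 with hβ₂def
  -- the difference identity
  have hdelta : ∀ r j, β₂ r j = β₁ r j +
      (if r = rK then t else if r = emb i then -t else 0) *
      (if j = i then 1 else -(e j)) := by
    intro r j
    by_cases h1 : j = i <;> by_cases h2 : r = emb j <;> by_cases h3 : r = emb i <;>
      by_cases h4 : r = rK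
    all_goals try exact absurd (h2.symm.trans h4) (hembne j)
    all_goals try exact absurd (h3.symm.trans h4) (hembne i)
    all_goals try exact absurd (hembinj (h2.symm.trans h3)) h1
    all_goals try exact absurd (h2.trans (by rw [h1])) h3
    all_goals try exact absurd (h3.trans (by rw [h1])) h2
    all_goals simp only [hβ₁def, hβ₂def]
    all_goals simp [h1, h2, h3, h4, hei, hembinj.eq_iff, hembne i, hembne j,
      Ne.symm (hembne i), Ne.symm (hembne j)]
    all_goals try simp [Ne.symm h1]
    all_goals try ring
  refine ⟨β₁, β₂, ?_, ?_, ?_, ?_, ?_, ?_⟩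
  · -- β₁ column stochastic
    constructor
    · intro r j
      have := hte j; have := hte0 j
      simp only [hβ₁def]
      split_ifs <;> linarith
    · intro j
      rw [show (∑ r, β₁ r j) = ∑ r : Fin W,
        (if r = emb j then 1 - t * e j else if r = rK then t * e j else 0) from rfl,
        aux_sum_two (hembne j)]
      ring
  · -- β₂ column stochastic
    constructor
    · intro r j
      have := hte j; have := hte0 j
      simp only [hβ₂def]
      split_ifs <;> linarith
    · intro j
      have hsum : ∀ r, β₂ r j = β₁ r j +
          (if r = rK then t else if r = emb i then -t else 0) *
          (if j = i then 1 else -(e j)) := fun r => hdelta r j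
      simp_rw [hsum, Finset.sum_add_distrib, ← Finset.sum_mul]
      rw [show (∑ r, β₁ r j) = ∑ r : Fin W,
        (if r = emb j then 1 - t * e j else if r = rK then t * e j else 0) from rfl,
        aux_sum_two (hembne j),
        aux_sum_two (fun h => hembne i h.symm) t (-t)]
      ring_nf
  · -- β₁ separable
    intro k
    refine ⟨emb k, ?_, ?_⟩
    · simp only [hβ₁def, if_pos rfl]
      have := hte k; linarith
    · intro l hl
      have h1 : emb k ≠ emb l := fun h => hl (hembinj h).symm
      simp [hβ₁def, h1, hembne k]
  · -- β₂ separable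
    intro k
    by_cases hk : k = i
    · refine ⟨rK, ?_, ?_⟩
      · have h1 : rK ≠ emb k := fun h => hembne k h.symm
        have h2 : rK ≠ emb i := fun h => hembne i h.symm
        simp [hβ₂def, h1, h2, hk, ht0]
      · intro l hl
        have h1 : rK ≠ emb l := fun h => hembne l h.symm
        have h2 : rK ≠ emb i := fun h => hembne i h.symm
        have h3 : l ≠ i := fun h => hl (h.trans hk.symm)
        simp [hβ₂def, h1, h2, h3]
    · refine ⟨emb k, ?_, ?_⟩
      · simp only [hβ₂def, if_pos rfl, if_neg hk]
        have := hte k; linarith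
      · intro l hl
        have h1 : emb k ≠ emb l := fun h => hl (hembinj h).symm
        have h2 : emb k ≠ emb i := fun h => hk (hembinj h)
        simp [hβ₂def, h1, h2, hembne k]
  · -- the distinguishing word
    refine ⟨emb i, ⟨i, ?_, ?_⟩, ?_⟩
    · simp only [hβ₁def, if_pos rfl]
      rw [hei]; norm_num
    · intro l hl
      have h1 : emb i ≠ emb l := fun h => hl (hembinj h).symm
      simp [hβ₁def, h1, hembne i]
    · -- emb i is not novel in β₂
      obtain ⟨j₀, hj₀⟩ : ∃ j₀, c j₀ ≠ 0 := by
        by_contra h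
        push_neg at h
        rw [Finset.sum_eq_zero (fun j _ => h j)] at hcsum
        norm_num at hcsum
      have hj₀i : j₀ ≠ i := fun h => hj₀ (h ▸ hci)
      have hej₀ : 0 < e j₀ :=
        mul_pos (lt_of_le_of_ne (hc0 j₀) (Ne.symm hj₀)) (div_pos (ha_pos i) (ha_pos j₀))
      intro k ⟨hpos, hzero⟩
      by_cases hk : k = i
      · have h1 : emb i ≠ emb j₀ := fun h => hj₀i (hembinj h).symm
        have hj₀k : j₀ ≠ k := fun h => hj₀i (h.trans hk)
        have := hzero j₀ hj₀k
        rw [show β₂ (emb i) j₀ = t * e j₀ by simp [hβ₂def, h1, hj₀i]] at this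
        nlinarith
      · have := hzero i (fun h => hk h.symm)
        rw [show β₂ (emb i) i = 1 - t by simp [hβ₂def]] at this
        linarith
  · -- a.e. equality
    filter_upwards [hY0] with ω hY
    funext r
    simp only [Matrix.mulVec, dotProduct]
    have hw : ∑ j, (if j = i then (1 : ℝ) else -(e j)) * θ ω j = Y ω := by
      have h : ∀ j, (if j = i then (1 : ℝ) else -(e j)) * θ ω j
          = (if j = i then θ ω i else 0) - e j * θ ω j := by
        intro j
        by_cases h : j = i
        · subst h; simp [hei]
        · simp [h]
          try ring
      simp_rw [h, Finset.sum_sub_distrib]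
      simp [hYdef]
    calc ∑ j, β₁ r j * θ ω j
        = ∑ j, (β₂ r j * θ ω j -
            (if r = rK then t else if r = emb i then -t else 0) *
            ((if j = i then (1 : ℝ) else -(e j)) * θ ω j)) := by
          refine Finset.sum_congr rfl fun j _ => ?_
          rw [hdelta r j]; ring
      _ = ∑ j, β₂ r j * θ ω j := by
          rw [Finset.sum_sub_distrib, ← Finset.mul_sum, hw, hY, mul_zero, sub_zero]
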